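/- Let (T, θ) be a stratified staged tree of level m and let 1 ≤ q ≤ m−1. If (T, θ) is balanced, then the truncated staged tree T^{(q)}, consisting of all vertices of level at most q with the induced edges and labelling, is also balanced and stratified. -/

import Mathlib

open MvPolynomial

inductive STree (L : Type) where
  | leaf : STree L
  | node : List (L × STree L) → STree L

namespace STree

variable {L : Type}

def children : STree L → List (L × STree L)
  | .leaf => []
  | .node cs => cs

def paths : STree L → List (List L)
  | .leaf => [[]]
  | .node cs => cs.attach.flatMap (fun x => (paths x.1.2).map (fun p => x.1.1 :: p))
termination_by t => sizeOf t
decreasing_by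
  have h := List.sizeOf_lt_of_mem x.2
  obtain ⟨⟨l, c⟩, hm⟩ := x
  simp only [Prod.mk.sizeOf_spec] at h
  simp only [STree.node.sizeOf_spec]
  omega

noncomputable def tpoly (T : STree L) : MvPolynomial L ℝ :=
  ((paths T).map (fun p => (p.map X).prod)).sum

def outLabels (T : STree L) : List L := T.children.map Prod.fst

def SameStage (v w : STree L) : Prop := ∀ l, l ∈ v.outLabels ↔ l ∈ w.outLabels

inductive OccursAt : STree L → ℕ → STree L → Prop where
  | refl (T : STree L) : OccursAt T 0 T
  | child {cs : List (L × STree L)} {l : L} {c v : STree L} {n : ℕ} :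
      (l, c) ∈ cs → OccursAt c n v → OccursAt (.node cs) (n + 1) v

def IsStagedTree (T : STree L) : Prop :=
  (∀ n cs, OccursAt T n (.node cs) → cs ≠ [] ∧ (cs.map Prod.fst).Nodup) ∧
  (∀ n m v w, OccursAt T n v → OccursAt T m w →
    (SameStage v w ∨ ∀ l, ¬(l ∈ v.outLabels ∧ l ∈ w.outLabels)))

def Star (v w : STree L) : Prop :=
  ∀ l l' c c' d d', l ≠ l' →
    (l, c) ∈ v.children → (l', c') ∈ v.children →
    (l, d) ∈ w.children → (l', d') ∈ w.children →
    tpoly c * tpoly d' = tpoly d * tpoly c'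

def Balanced (T : STree L) : Prop :=
  ∀ n m v w, OccursAt T n v → OccursAt T m w → SameStage v w → Star v w

def Stratified (T : STree L) : Prop :=
  (∀ n m, OccursAt T n .leaf → OccursAt T m .leaf → n = m) ∧
  (∀ n m v w, OccursAt T n v → OccursAt T m w → SameStage v w → n = m)

end STree

namespace STree
variable {L : Type}

def trunc : ℕ → STree L → STree L
  | 0, _ => .leaf
  | _ + 1, .leaf => .leaf
  | q + 1, .node cs => .node (cs.attach.map (fun x => (x.1.1, trunc q x.1.2)))

def contract : STree L → STree L
  | .leaf => .leaf
  | .node [(_, c)] => contract c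
  | .node cs => .node (cs.attach.map (fun x => (x.1.1, contract x.1.2)))
termination_by t => sizeOf t
decreasing_by
  · simp only [STree.node.sizeOf_spec, List.cons.sizeOf_spec, Prod.mk.sizeOf_spec,
      List.nil.sizeOf_spec]
    omega
  · have h := List.sizeOf_lt_of_mem x.2
    obtain ⟨⟨l, c⟩, hm⟩ := x
    simp only [Prod.mk.sizeOf_spec] at h
    simp only [STree.node.sizeOf_spec]
    omega

def glueAux (f : List L → List L) : List L → STree L → STree L
  | pre, .leaf => .node ((f pre).map (fun l => (l, .leaf)))
  | pre, .node cs => .node (cs.attach.map (fun x => (x.1.1, glueAux f (pre ++ [x.1.1]) x.1.2)))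
termination_by _ t => sizeOf t
decreasing_by
  have h := List.sizeOf_lt_of_mem x.2
  obtain ⟨⟨l, c⟩, hm⟩ := x
  simp only [Prod.mk.sizeOf_spec] at h
  simp only [STree.node.sizeOf_spec]
  omega

def cut : ℕ → STree L → List (List L × STree L)
  | 0, t => [([], t)]
  | _ + 1, .leaf => []
  | d + 1, .node cs => cs.attach.flatMap
      (fun x => (cut d x.1.2).map (fun q => (x.1.1 :: q.1, q.2)))

def OneLevel (T : STree L) : Prop :=
  ∃ cs, T = STree.node cs ∧ cs ≠ [] ∧ ∀ p ∈ cs, p.2 = STree.leaf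

def labelSet (T : STree L) : Set L := {l | ∃ p ∈ paths T, l ∈ p}

end STree
namespace STree

variable {L : Type}

attribute [local instance] Classical.propDecidable

theorem tpoly_leaf : tpoly (leaf : STree L) = 1 := by
  simp [tpoly, paths]

theorem tpoly_node (cs : List (L × STree L)) :
    tpoly (STree.node cs) = (cs.map (fun x => X x.1 * tpoly x.2)).sum := by
  rw [tpoly, paths, List.map_flatMap, List.flatMap, List.sum_flatten, List.map_map,
    ← List.attach_map_val (l := cs) (f := fun x => X x.1 * tpoly x.2)]
  congr 1
  apply List.map_congr_left
  intro a _
  simp only [Function.comp, List.map_map]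
  rw [tpoly, ← List.sum_map_mul_left]
  congr 1

theorem occ_trans {T v u : STree L} {n k : ℕ} (h1 : OccursAt T n v)
    (h2 : OccursAt v k u) : OccursAt T (n + k) u := by
  induction h1 with
  | refl t => simpa using h2
  | child hmem _ ih =>
    have := OccursAt.child hmem (ih h2)
    simpa [Nat.add_right_comm] using this

theorem occ_snoc {T : STree L} {n : ℕ} {cs : List (L × STree L)} {l : L} {c : STree L}
    (h : OccursAt T n (.node cs)) (hmem : (l, c) ∈ cs) : OccursAt T (n + 1) c :=
  occ_trans h (.child hmem (.refl c))

theorem stage_of_shared {T v w : STree L} {n n' : ℕ} {l : L} (hst : IsStagedTree T)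
    (h1 : OccursAt T n v) (h2 : OccursAt T n' w) (hv : l ∈ v.outLabels)
    (hw : l ∈ w.outLabels) : SameStage v w := by
  rcases hst.2 n n' v w h1 h2 with h | h
  · exact h
  · exact absurd ⟨hv, hw⟩ (h l)

theorem children_len_eq {v w : STree L} (hv : v.outLabels.Nodup) (hw : w.outLabels.Nodup)
    (hss : SameStage v w) : v.children.length = w.children.length := by
  classical
  have h1 : v.outLabels.length = w.outLabels.length := by
    rw [← List.toFinset_card_of_nodup hv, ← List.toFinset_card_of_nodup hw]
    congr 1
    ext a
    simpa using hss a
  simpa [outLabels] using h1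

noncomputable def gmap (T : STree L) (q : ℕ) (l : L) : MvPolynomial L ℝ :=
  if ∃ n v, n < q ∧ OccursAt T n v ∧ l ∈ outLabels v then X l
  else if h : ∃ p : ℕ × STree L, OccursAt T p.1 p.2 ∧ l ∈ outLabels p.2 then
    C ((h.choose.2.children.length : ℝ)⁻¹)
  else 1

theorem gmap_lt {T : STree L} {q : ℕ} {l : L}
    (h : ∃ n v, n < q ∧ OccursAt T n v ∧ l ∈ outLabels v) : gmap T q l = X l := by
  rw [gmap, if_pos h]

theorem gmap_ge {T : STree L} (hst : IsStagedTree T) (hS : Stratified T) {q n : ℕ}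
    {u : STree L} {l : L} (hocc : OccursAt T n u) (hl : l ∈ outLabels u) (hn : q ≤ n) :
    gmap T q l = C ((u.children.length : ℝ)⁻¹) := by
  have hneg : ¬ ∃ n' v, n' < q ∧ OccursAt T n' v ∧ l ∈ outLabels v := by
    rintro ⟨n', v, hlt, ho, hl'⟩
    have := hS.2 n' n v u ho hocc (stage_of_shared hst ho hocc hl' hl)
    omega
  have hex : ∃ p : ℕ × STree L, OccursAt T p.1 p.2 ∧ l ∈ outLabels p.2 := ⟨(n, u), hocc, hl⟩
  rw [gmap, if_neg hneg, dif_pos hex]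
  have hsp := hex.choose_spec
  have hss := stage_of_shared hst hsp.1 hocc hsp.2 hl
  have hn1 : (hex.choose.2).outLabels.Nodup := by
    rcases hv : hex.choose.2 with _ | ds
    · rw [hv] at hsp; simp [outLabels, children] at hsp
    · have := (hst.1 hex.choose.1 ds (by rw [← hv]; exact hsp.1)).2
      simpa [outLabels, children] using this
  have hn2 : u.outLabels.Nodup := by
    rcases hu : u with _ | ds
    · rw [hu] at hl; simp [outLabels, children] at hl
    · have := (hst.1 n ds (by rw [← hu]; exact hocc)).2
      simpa [outLabels, children] using this
  rw [children_len_eq hn1 hn2 hss]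

theorem lemB (T : STree L) (hst : IsStagedTree T) (hS : Stratified T) (q : ℕ) :
    ∀ (v : STree L) (n : ℕ), OccursAt T n v → q ≤ n →
      aeval (gmap T q) (tpoly v) = 1
  | .leaf, n, _, _ => by simp [tpoly_leaf]
  | .node cs, n, hocc, hn => by
    have hne := (hst.1 n cs hocc).1
    rw [tpoly_node, map_list_sum, List.map_map]
    have hterm : ∀ x ∈ cs, ((aeval (gmap T q)) ∘ fun x => X x.1 * tpoly x.2) x
        = C ((cs.length : ℝ)⁻¹) := by
      intro x hx
      have h1 : x.1 ∈ outLabels (STree.node cs) := by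
        simp only [outLabels, children, List.mem_map]
        exact ⟨x, hx, rfl⟩
      have h2 : OccursAt T (n + 1) x.2 := occ_snoc hocc hx
      simp only [Function.comp_apply, map_mul, aeval_X]
      rw [lemB T hst hS q x.2 (n + 1) h2 (le_trans hn (Nat.le_succ n)), mul_one,
        gmap_ge hst hS hocc h1 hn]
      rfl
    rw [List.map_congr_left hterm, List.map_const', List.sum_replicate,
      ← map_nsmul (C : ℝ →+* MvPolynomial L ℝ), nsmul_eq_mul,
      mul_inv_cancel₀ (by exact_mod_cast fun h => hne (List.length_eq_zero_iff.1 h)), map_one]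
  termination_by v => sizeOf v
  decreasing_by
    have h := List.sizeOf_lt_of_mem hx
    obtain ⟨l, c⟩ := x
    simp only [Prod.mk.sizeOf_spec] at h
    simp only [STree.node.sizeOf_spec]
    omega

theorem lemA (T : STree L) (hst : IsStagedTree T) (hS : Stratified T) {m q : ℕ}
    (hm : OccursAt T m .leaf) (hqm : q < m) :
    ∀ (v : STree L) (n : ℕ), OccursAt T n v → n ≤ q →
      aeval (gmap T q) (tpoly v) = tpoly (trunc (q - n) v)
  | .leaf, n, hocc, hn => by
    rcases eq_or_lt_of_le hn with rfl | hlt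
    · simp [tpoly_leaf, Nat.sub_self, trunc]
    · exact absurd (hS.1 n m hocc hm) (by omega)
  | .node cs, n, hocc, hn => by
    rcases eq_or_lt_of_le hn with rfl | hlt
    · rw [Nat.sub_self]
      rw [show trunc 0 (STree.node cs) = (.leaf : STree L) from rfl, tpoly_leaf]
      exact lemB T hst hS n (.node cs) n hocc le_rfl
    · have hq : q - n = (q - (n + 1)) + 1 := by omega
      rw [hq]
      rw [show trunc ((q - (n + 1)) + 1) (STree.node cs)
          = .node (cs.attach.map (fun x => (x.1.1, trunc (q - (n + 1)) x.1.2))) from rfl]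
      rw [tpoly_node, tpoly_node, map_list_sum, List.map_map, List.map_map]
      rw [show ((fun x : L × STree L => X x.1 * tpoly x.2) ∘
            fun x : {y // y ∈ cs} => (x.1.1, trunc (q - (n + 1)) x.1.2))
          = fun x : {y // y ∈ cs} => X x.1.1 * tpoly (trunc (q - (n + 1)) x.1.2) from rfl]
      rw [List.attach_map_val (l := cs) (f := fun x => X x.1 * tpoly (trunc (q - (n + 1)) x.2))]
      congr 1
      apply List.map_congr_left
      intro x hx
      have h1 : x.1 ∈ outLabels (STree.node cs) := by
        simp only [outLabels, children, List.mem_map]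
        exact ⟨x, hx, rfl⟩
      have h2 : OccursAt T (n + 1) x.2 := occ_snoc hocc hx
      simp only [Function.comp_apply, map_mul, aeval_X]
      rw [gmap_lt ⟨n, .node cs, hlt, hocc, h1⟩,
        lemA T hst hS hm hqm x.2 (n + 1) h2 (by omega)]
  termination_by v => sizeOf v
  decreasing_by
    have h := List.sizeOf_lt_of_mem hx
    obtain ⟨l, c⟩ := x
    simp only [Prod.mk.sizeOf_spec] at h
    simp only [STree.node.sizeOf_spec]
    omega

theorem occ_trunc {n : ℕ} {t v : STree L} (h : OccursAt t n v) :
    ∀ q T, t = trunc q T → n ≤ q ∧ ∃ v', OccursAt T n v' ∧ v = trunc (q - n) v' := by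
  induction h with
  | refl t => exact fun q T hE => ⟨Nat.zero_le _, T, .refl T, by simpa using hE⟩
  | @child cs l c v k hmem hocc ih =>
    intro q T hE
    match q, T with
    | 0, T => exact absurd hE (by simp [trunc])
    | q + 1, .leaf => exact absurd hE (by simp [trunc])
    | q + 1, .node ds =>
      rw [show trunc (q + 1) (STree.node ds)
          = .node (ds.attach.map (fun x => (x.1.1, trunc q x.1.2))) from rfl] at hE
      injection hE with hE
      subst hE
      rcases List.mem_map.1 hmem with ⟨x, _, hxe⟩
      have hl : x.1.1 = l := congrArg Prod.fst hxe
      have hc : trunc q x.1.2 = c := congrArg Prod.snd hxe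
      rcases ih q x.1.2 hc.symm with ⟨hk, v', hov, hve⟩
      refine ⟨Nat.succ_le_succ hk, v', .child (l := l) ?_ hov, ?_⟩
      · rw [← hl]
        have := x.2
        simpa using this
      · simpa [Nat.succ_sub_succ] using hve

theorem trunc_occ {T v : STree L} {n : ℕ} (h : OccursAt T n v) :
    ∀ q, n ≤ q → OccursAt (trunc q T) n (trunc (q - n) v) := by
  induction h with
  | refl t => intro q _; simpa using OccursAt.refl (trunc q t)
  | @child cs l c v k hmem hocc ih =>
    intro q hq
    match q with
    | q + 1 =>
      have h1 : (l, trunc q c) ∈ (trunc (q + 1) (STree.node cs)).children :=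
        List.mem_map.2 ⟨⟨(l, c), hmem⟩, List.mem_attach _ _, rfl⟩
      have h2 := ih q (by omega)
      have : OccursAt (trunc (q + 1) (STree.node cs)) (k + 1) (trunc (q - k) v) :=
        OccursAt.child h1 h2
      simpa [Nat.succ_sub_succ] using this

theorem outLabels_trunc (k : ℕ) (v : STree L) : outLabels (trunc (k + 1) v) = outLabels v := by
  cases v with
  | leaf => rfl
  | node cs =>
    show (cs.attach.map fun x => (x.1.1, trunc k x.1.2)).map Prod.fst = cs.map Prod.fst
    rw [List.map_map]
    exact List.attach_map_val (l := cs) (f := Prod.fst)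

theorem mem_children_trunc {k : ℕ} {cs : List (L × STree L)} {l : L} {c : STree L}
    (h : (l, c) ∈ (trunc (k + 1) (STree.node cs)).children) :
    ∃ c₀, (l, c₀) ∈ cs ∧ c = trunc k c₀ := by
  rcases List.mem_map.1 h with ⟨x, _, hxe⟩
  have hl : x.1.1 = l := congrArg Prod.fst hxe
  have hc : trunc k x.1.2 = c := congrArg Prod.snd hxe
  refine ⟨x.1.2, ?_, hc.symm⟩
  rw [← hl]
  have := x.2
  simpa using this

end STree

open STree in
theorem stmt2 {L : Type} (T : STree L) (hst : IsStagedTree T) (hS : Stratified T)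
    {m q : ℕ} (hm : OccursAt T m STree.leaf) (hq1 : 1 ≤ q) (hq2 : q ≤ m - 1)
    (hbal : Balanced T) :
    Balanced (trunc q T) ∧ Stratified (trunc q T) := by
  have hm2 : 2 ≤ m := by omega
  have hqm : q < m := by omega
  -- leaf occurrences in the truncation are exactly at level q
  have hleaf : ∀ n v', OccursAt T n v' → STree.leaf = trunc (q - n) v' → n ≤ q → n = q := by
    intro n v' hv' he hn
    by_contra hne
    have hlt : n < q := by omega
    have hq' : q - n = (q - n - 1) + 1 := by omega
    rw [hq'] at he
    cases v' with
    | leaf => exact absurd (hS.1 n m hv' hm) (by omega)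
    | node cs => exact absurd he (by simp [trunc])
  -- nodes occurring strictly above level q in the truncation come from nodes of T
  have hnode : ∀ n v', OccursAt T n v' → n < q →
      ∃ cs, v' = STree.node cs ∧ cs ≠ [] ∧ (cs.map Prod.fst).Nodup := by
    intro n v' hv' hlt
    cases v' with
    | leaf => exact absurd (hS.1 n m hv' hm) (by omega)
    | node cs => exact ⟨cs, rfl, hst.1 n cs hv'⟩
  constructor
  · -- Balanced
    intro n n' v w hv hw hss
    obtain ⟨hnq, v', hv', rfl⟩ := occ_trunc hv q T rfl
    obtain ⟨hn'q, w', hw', rfl⟩ := occ_trunc hw q T rfl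
    intro l l' c c' d d' hne hc hc' hd hd'
    by_cases h0 : q - n = 0
    · rw [h0] at hc
      exact absurd hc (by simp [trunc, children])
    by_cases h0' : q - n' = 0
    · rw [h0'] at hd
      exact absurd hd (by simp [trunc, children])
    have hltn : n < q := by omega
    have hltn' : n' < q := by omega
    obtain ⟨cs, rfl, hcs0, -⟩ := hnode n v' hv' hltn
    obtain ⟨ds, rfl, hds0, -⟩ := hnode n' w' hw' hltn'
    have hqn : q - n = (q - (n + 1)) + 1 := by omega
    have hqn' : q - n' = (q - (n' + 1)) + 1 := by omega
    rw [hqn] at hc hc'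
    rw [hqn'] at hd hd'
    obtain ⟨c₀, hc₀, rfl⟩ := mem_children_trunc hc
    obtain ⟨c₀', hc₀', rfl⟩ := mem_children_trunc hc'
    obtain ⟨d₀, hd₀, rfl⟩ := mem_children_trunc hd
    obtain ⟨d₀', hd₀', rfl⟩ := mem_children_trunc hd'
    have hss' : SameStage (STree.node cs) (STree.node ds) := by
      intro a
      have := hss a
      rwa [hqn, hqn', outLabels_trunc, outLabels_trunc] at this
    have E := hbal n n' _ _ hv' hw' hss' l l' c₀ c₀' d₀ d₀' hne hc₀ hc₀' hd₀ hd₀'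
    have E2 := congrArg (aeval (gmap T q)) E
    rw [map_mul, map_mul,
      lemA T hst hS hm hqm c₀ (n + 1) (occ_snoc hv' hc₀) (by omega),
      lemA T hst hS hm hqm c₀' (n + 1) (occ_snoc hv' hc₀') (by omega),
      lemA T hst hS hm hqm d₀ (n' + 1) (occ_snoc hw' hd₀) (by omega),
      lemA T hst hS hm hqm d₀' (n' + 1) (occ_snoc hw' hd₀') (by omega)] at E2
    exact E2
  · constructor
    · -- leaves all at level q
      intro n n' h1 h2
      obtain ⟨hnq, v', hv', he⟩ := occ_trunc h1 q T rfl
      obtain ⟨hn'q, w', hw', he'⟩ := occ_trunc h2 q T rfl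
      rw [hleaf n v' hv' he hnq, hleaf n' w' hw' he' hn'q]
    · -- same-stage vertices at same level
      intro n n' v w h1 h2 hss
      obtain ⟨hnq, v', hv', rfl⟩ := occ_trunc h1 q T rfl
      obtain ⟨hn'q, w', hw', rfl⟩ := occ_trunc h2 q T rfl
      by_cases h0 : q - n = 0
      · by_cases h0' : q - n' = 0
        · omega
        · exfalso
          have hltn' : n' < q := by omega
          obtain ⟨ds, rfl, hds0, -⟩ := hnode n' w' hw' hltn'
          obtain ⟨p, hp⟩ := List.exists_mem_of_ne_nil ds hds0
          have hqn' : q - n' = (q - n' - 1) + 1 := by omega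
          have hmem : p.1 ∈ outLabels (trunc (q - n') (STree.node ds)) := by
            rw [hqn', outLabels_trunc]
            exact List.mem_map.2 ⟨p, hp, rfl⟩
          have := (hss p.1).2 hmem
          rw [h0] at this
          simp [trunc, outLabels, children] at this
      · by_cases h0' : q - n' = 0
        · exfalso
          have hltn : n < q := by omega
          obtain ⟨cs, rfl, hcs0, -⟩ := hnode n v' hv' hltn
          obtain ⟨p, hp⟩ := List.exists_mem_of_ne_nil cs hcs0
          have hqn : q - n = (q - n - 1) + 1 := by omega
          have hmem : p.1 ∈ outLabels (trunc (q - n) (STree.node cs)) := by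
            rw [hqn, outLabels_trunc]
            exact List.mem_map.2 ⟨p, hp, rfl⟩
          have := (hss p.1).1 hmem
          rw [h0'] at this
          simp [trunc, outLabels, children] at this
        · have hqn : q - n = (q - n - 1) + 1 := by omega
          have hqn' : q - n' = (q - n' - 1) + 1 := by omega
          have hss' : SameStage v' w' := by
            intro a
            have := hss a
            rwa [hqn, hqn', outLabels_trunc, outLabels_trunc] at this
          exact hS.2 n n' v' w' hv' hw' hss'
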